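/- arXiv:2305.05449 — 6 statements merged into one kernel-verified Lean document; each statement's English description precedes it below -/
import Mathlib

section
/- Let H₁, H₂, H₃ be complex Hilbert spaces and let d₁ : H₁ → H₂, d₂ : H₂ → H₃ be densely defined closed unbounded operators satisfying the complex property (for every x in D(d₁), d₁x ∈ D(d₂) and d₂(d₁x) = 0). Then the Hodge Laplace operator Δ on H₂, with domain D(Δ) = {x ∈ D(d₂) ∩ D(d₁†) : d₂x ∈ D(d₂†) and d₁†x ∈ D(d₁)} and Δx = d₂†(d₂x) + d₁(d₁†x), is a non-negative self-adjoint operator: Δ is densely defined, Δ† = Δ, and ⟨Δx, x⟩ ≥ 0 for all x ∈ D(Δ). -/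
set_option linter.unusedSectionVars false
set_option maxHeartbeats 1000000
set_option synthInstance.maxHeartbeats 400000

open scoped ComplexInnerProductSpace ComplexOrder

namespace HodgeAux

open LinearPMap

variable {E F : Type*}
  [NormedAddCommGroup E] [InnerProductSpace ℂ E] [CompleteSpace E]
  [NormedAddCommGroup F] [InnerProductSpace ℂ F] [CompleteSpace F]

/-- Helper: membership of the graph of a `LinearPMap` in terms of an existential over
the membership proof. -/
theorem mem_graph_iff'' (T : E →ₗ.[ℂ] F) {x : E} {y : F} :
    (x, y) ∈ T.graph ↔ ∃ h : x ∈ T.domain, T ⟨x, h⟩ = y := by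
  rw [LinearPMap.mem_graph_iff]
  constructor
  · rintro ⟨u, hu1, hu2⟩
    have hu1' : (u : E) = x := hu1
    have hx : x ∈ T.domain := hu1' ▸ u.2
    refine ⟨hx, ?_⟩
    rw [show (⟨x, hx⟩ : T.domain) = u from Subtype.ext hu1'.symm]
    exact hu2
  · rintro ⟨h, hval⟩
    exact ⟨⟨x, h⟩, rfl, hval⟩

/-- Helper for adjoint membership together with the value. -/
theorem adjoint_mem_and_eq (T : E →ₗ.[ℂ] F) (hT : Dense (T.domain : Set E))
    (y : F) (w : E) (h : ∀ x : T.domain, ⟪w, (x : E)⟫ = ⟪y, T x⟫) :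
    ∃ hy : y ∈ T.adjoint.domain, T.adjoint ⟨y, hy⟩ = w := by
  have hy : y ∈ T.adjoint.domain := LinearPMap.mem_adjoint_domain_of_exists y ⟨w, h⟩
  exact ⟨hy, LinearPMap.adjoint_apply_eq hT ⟨y, hy⟩ h⟩

/-- The adjoint of a densely defined operator is closed. -/
theorem adjoint_isClosed (T : E →ₗ.[ℂ] F) (hT : Dense (T.domain : Set E)) :
    T.adjoint.IsClosed := by
  have hset : (T.adjoint.graph : Set (F × E)) =
      ⋂ x : T.domain, {p : F × E | ⟪p.2, (x : E)⟫ = ⟪p.1, T x⟫} := by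
    ext p
    simp only [Set.mem_iInter, Set.mem_setOf_eq, SetLike.mem_coe]
    rw [show p = (p.1, p.2) from rfl, mem_graph_iff'']
    constructor
    · rintro ⟨h, hval⟩ x
      rw [← hval]
      exact LinearPMap.adjoint_isFormalAdjoint hT ⟨p.1, h⟩ x
    · intro h
      exact adjoint_mem_and_eq T hT p.1 p.2 h
  rw [LinearPMap.IsClosed, hset]
  refine isClosed_iInter fun x => isClosed_eq ?_ ?_
  · exact Continuous.inner continuous_snd continuous_const
  · exact Continuous.inner continuous_fst continuous_const

/-- Key lemma: if `(z, w)` satisfies the weak identity against the adjoint of a closed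
densely defined operator `T`, then `(z, w)` belongs to the graph of `T`. -/
theorem mem_of_forall_adjoint (T : E →ₗ.[ℂ] F) (hT : Dense (T.domain : Set E))
    (hTc : T.IsClosed) (z : E) (w : F)
    (h : ∀ y : T.adjoint.domain, ⟪w, (y : F)⟫ = ⟪z, T.adjoint y⟫) :
    ∃ hz : z ∈ T.domain, T ⟨z, hz⟩ = w := by
  set e := WithLp.linearEquiv 2 ℂ (E × F) with he
  set G : Submodule ℂ (WithLp 2 (E × F)) := T.graph.comap e.toLinearMap with hG
  have hGc : IsClosed (G : Set (WithLp 2 (E × F))) := by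
    have : Continuous (e : WithLp 2 (E × F) → E × F) := WithLp.prod_continuous_ofLp 2 E F
    exact hTc.preimage this
  haveI : CompleteSpace G := hGc.completeSpace_coe
  have key : e.symm (z, w) ∈ Gᗮᗮ := by
    rw [Submodule.mem_orthogonal]
    intro q hq
    have hq' : ∀ x : T.domain, ⟪(-q.fst : E), (x : E)⟫ = ⟪q.snd, T x⟫ := by
      intro x
      have hx : e.symm ((x : E), T x) ∈ G := by
        simp only [hG, Submodule.mem_comap]
        simpa using T.mem_graph x
      have h0 := (Submodule.mem_orthogonal G q).mp hq _ hx
      rw [WithLp.prod_inner_apply] at h0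
      have h1 : ⟪(x : E), q.fst⟫ + ⟪T x, q.snd⟫ = 0 := h0
      have h2 := congrArg (starRingEnd ℂ) h1
      simp only [_root_.map_add, inner_conj_symm, _root_.map_zero] at h2
      rw [inner_neg_left]
      linear_combination -h2
    obtain ⟨hmem, hval⟩ := adjoint_mem_and_eq T hT q.snd (-q.fst) hq'
    rw [WithLp.prod_inner_apply]
    have hz1 : (e.symm (z, w)).fst = z := rfl
    have hz2 : (e.symm (z, w)).snd = w := rfl
    change ⟪q.fst, (e.symm (z, w)).fst⟫ + ⟪q.snd, (e.symm (z, w)).snd⟫ = 0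
    rw [hz1, hz2]
    have h3 := h ⟨q.snd, hmem⟩
    rw [hval] at h3
    have h4 := congrArg (starRingEnd ℂ) h3
    simp only [inner_conj_symm] at h4
    rw [inner_neg_left] at h4
    linear_combination h4
  rw [Submodule.orthogonal_orthogonal] at key
  have hmem : (z, w) ∈ T.graph := by
    have h5 := (Submodule.mem_comap).mp key
    simpa using h5
  exact (mem_graph_iff'' T).mp hmem

/-- Conjugate-symmetric version of the formal adjoint identity. -/
theorem formal_symm (T : E →ₗ.[ℂ] F) (hT : Dense (T.domain : Set E))
    (z : T.domain) (y : T.adjoint.domain) :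
    ⟪T z, (y : F)⟫ = ⟪(z : E), T.adjoint y⟫ := by
  have h1 := LinearPMap.adjoint_isFormalAdjoint hT y z
  have h2 := congrArg (starRingEnd ℂ) h1
  simpa only [inner_conj_symm] using h2.symm

end HodgeAux

/-- The Hodge Laplace operator associated to a two-term complex of densely defined
closed operators between complex Hilbert spaces is a non-negative self-adjoint operator. -/
theorem hodgeLaplace_selfAdjoint_nonneg
    {H₁ H₂ H₃ : Type*}
    [NormedAddCommGroup H₁] [InnerProductSpace ℂ H₁] [CompleteSpace H₁]
    [NormedAddCommGroup H₂] [InnerProductSpace ℂ H₂] [CompleteSpace H₂]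
    [NormedAddCommGroup H₃] [InnerProductSpace ℂ H₃] [CompleteSpace H₃]
    (d₁ : H₁ →ₗ.[ℂ] H₂) (d₂ : H₂ →ₗ.[ℂ] H₃)
    (hd₁ : Dense (d₁.domain : Set H₁)) (hd₂ : Dense (d₂.domain : Set H₂))
    (hd₁c : d₁.IsClosed) (hd₂c : d₂.IsClosed)
    -- the complex property: `d₂ ∘ d₁ = 0`
    (hmem : ∀ x : d₁.domain, d₁ x ∈ d₂.domain)
    (hcomp : ∀ (x : d₁.domain) (h : d₁ x ∈ d₂.domain), d₂ ⟨d₁ x, h⟩ = 0)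
    -- `Δ` is the Hodge Laplace operator of the complex:
    (Δ : H₂ →ₗ.[ℂ] H₂)
    (hΔdom : ∀ x : H₂, x ∈ Δ.domain ↔
      ∃ (h₂ : x ∈ d₂.domain) (h₁ : x ∈ d₁.adjoint.domain),
        d₂ ⟨x, h₂⟩ ∈ d₂.adjoint.domain ∧ d₁.adjoint ⟨x, h₁⟩ ∈ d₁.domain)
    (hΔval : ∀ (x : H₂) (hx : x ∈ Δ.domain) (h₂ : x ∈ d₂.domain)
      (h₁ : x ∈ d₁.adjoint.domain) (h₂' : d₂ ⟨x, h₂⟩ ∈ d₂.adjoint.domain)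
      (h₁' : d₁.adjoint ⟨x, h₁⟩ ∈ d₁.domain),
      Δ ⟨x, hx⟩ = d₂.adjoint ⟨d₂ ⟨x, h₂⟩, h₂'⟩ + d₁ ⟨d₁.adjoint ⟨x, h₁⟩, h₁'⟩) :
    Dense (Δ.domain : Set H₂) ∧ Δ.adjoint = Δ ∧
      ∀ x : Δ.domain, 0 ≤ ⟪Δ x, (x : H₂)⟫ := by
  classical
  -- the adjoint of `d₁` is closed
  have hT₁c : d₁.adjoint.IsClosed := HodgeAux.adjoint_isClosed d₁ hd₁
  -- the range of `d₁` and kernels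
  set R₁ : Submodule ℂ H₂ := LinearMap.range d₁.toFun with hR₁def
  set N₁ : Submodule ℂ H₂ := R₁ᗮ with hN₁def
  set N₂ : Submodule ℂ H₂ := (LinearMap.ker d₂.toFun).map d₂.domain.subtype with hN₂def
  have hN₂mem : ∀ x : H₂, x ∈ N₂ ↔ ∃ h : x ∈ d₂.domain, d₂ ⟨x, h⟩ = 0 := by
    intro x
    constructor
    · rintro ⟨y, hy, rfl⟩
      exact ⟨y.2, LinearMap.mem_ker.mp hy⟩
    · rintro ⟨h, hval⟩
      exact ⟨⟨x, h⟩, LinearMap.mem_ker.mpr hval, rfl⟩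
  have hN₂closed : IsClosed (N₂ : Set H₂) := by
    have hset : (N₂ : Set H₂) = (fun x : H₂ => (x, (0 : H₃))) ⁻¹' (d₂.graph : Set (H₂ × H₃)) := by
      ext x
      simp only [Set.mem_preimage, SetLike.mem_coe, HodgeAux.mem_graph_iff'', hN₂mem]
    rw [hset]
    exact hd₂c.preimage (continuous_id.prodMk continuous_const)
  have hR₁N₂ : R₁ ≤ N₂ := by
    rintro x ⟨u, rfl⟩
    exact (hN₂mem _).mpr ⟨hmem u, hcomp u (hmem u)⟩
  have hoN₂ : N₂ᗮ ≤ N₁ := Submodule.orthogonal_le hR₁N₂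
  have hoN₁ : N₁ᗮ ≤ N₂ := by
    rw [hN₁def, Submodule.orthogonal_orthogonal_eq_closure]
    exact R₁.topologicalClosure_minimal hR₁N₂ hN₂closed
  have hN₁adj : ∀ x : H₂, x ∈ N₁ →
      ∃ h : x ∈ d₁.adjoint.domain, d₁.adjoint ⟨x, h⟩ = 0 := by
    intro x hx
    apply HodgeAux.adjoint_mem_and_eq d₁ hd₁ x 0
    intro u
    have h1 : ⟪d₁ u, x⟫ = 0 := (Submodule.mem_orthogonal R₁ x).mp hx _ ⟨u, rfl⟩
    have h2 := congrArg (starRingEnd ℂ) h1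
    simp only [inner_conj_symm, _root_.map_zero] at h2
    rw [inner_zero_left, h2]
  -- instances for orthogonal projections
  haveI : CompleteSpace N₁ := R₁.isClosed_orthogonal.completeSpace_coe
  haveI : CompleteSpace N₂ := hN₂closed.completeSpace_coe
  haveI : Submodule.HasOrthogonalProjection N₁ := Submodule.HasOrthogonalProjection.ofCompleteSpace _
  haveI : Submodule.HasOrthogonalProjection N₂ := Submodule.HasOrthogonalProjection.ofCompleteSpace _
  -- the ambient L² product space and the graph of the pair (d₂, d₁†)
  set φ₂ : WithLp 2 (WithLp 2 (H₂ × H₃) × H₁) →ₗ[ℂ] H₂ × H₃ :=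
    { toFun := fun p => (p.fst.fst, p.fst.snd), map_add' := fun _ _ => rfl,
      map_smul' := fun _ _ => rfl } with hφ₂def
  set φ₁ : WithLp 2 (WithLp 2 (H₂ × H₃) × H₁) →ₗ[ℂ] H₂ × H₁ :=
    { toFun := fun p => (p.fst.fst, p.snd), map_add' := fun _ _ => rfl,
      map_smul' := fun _ _ => rfl } with hφ₁def
  have hφ₂c : Continuous (φ₂ : WithLp 2 (WithLp 2 (H₂ × H₃) × H₁) → H₂ × H₃) := by
    have h1 : Continuous fun p : WithLp 2 (WithLp 2 (H₂ × H₃) × H₁) =>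
        (WithLp.equiv 2 _ p).1 :=
      continuous_fst.comp (WithLp.prod_continuous_ofLp 2 (WithLp 2 (H₂ × H₃)) H₁)
    exact (WithLp.prod_continuous_ofLp 2 H₂ H₃).comp h1
  have hφ₁c : Continuous (φ₁ : WithLp 2 (WithLp 2 (H₂ × H₃) × H₁) → H₂ × H₁) := by
    have h1 : Continuous fun p : WithLp 2 (WithLp 2 (H₂ × H₃) × H₁) =>
        (WithLp.equiv 2 _ p).1 :=
      continuous_fst.comp (WithLp.prod_continuous_ofLp 2 (WithLp 2 (H₂ × H₃)) H₁)
    have hfst : Continuous fun p : WithLp 2 (WithLp 2 (H₂ × H₃) × H₁) =>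
        (WithLp.equiv 2 (H₂ × H₃) ((WithLp.equiv 2 _ p).1)).1 :=
      continuous_fst.comp ((WithLp.prod_continuous_ofLp 2 H₂ H₃).comp h1)
    have hsnd : Continuous fun p : WithLp 2 (WithLp 2 (H₂ × H₃) × H₁) =>
        (WithLp.equiv 2 _ p).2 :=
      continuous_snd.comp (WithLp.prod_continuous_ofLp 2 (WithLp 2 (H₂ × H₃)) H₁)
    exact hfst.prodMk hsnd
  set K : Submodule ℂ (WithLp 2 (WithLp 2 (H₂ × H₃) × H₁)) :=
    (d₂.graph.comap φ₂) ⊓ (d₁.adjoint.graph.comap φ₁) with hKdef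
  have hKclosed : IsClosed (K : Set (WithLp 2 (WithLp 2 (H₂ × H₃) × H₁))) := by
    rw [hKdef, Submodule.coe_inf]
    exact (hd₂c.preimage hφ₂c).inter (hT₁c.preimage hφ₁c)
  haveI : CompleteSpace K := hKclosed.completeSpace_coe
  haveI : Submodule.HasOrthogonalProjection K := Submodule.HasOrthogonalProjection.ofCompleteSpace _
  set ι : H₂ → H₃ → H₁ → WithLp 2 (WithLp 2 (H₂ × H₃) × H₁) := fun a b c =>
    (WithLp.equiv 2 _).symm ((WithLp.equiv 2 (H₂ × H₃)).symm (a, b), c) with hιdef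
  have hKmem : ∀ (a : H₂) (b : H₃) (c : H₁), ι a b c ∈ K ↔
      ((a, b) ∈ d₂.graph ∧ (a, c) ∈ d₁.adjoint.graph) := by
    intro a b c
    rw [hKdef, Submodule.mem_inf, Submodule.mem_comap, Submodule.mem_comap]
    rfl
  -- symmetry of Δ against pairs in the form domain
  have key_sym : ∀ (x : H₂) (hx : x ∈ Δ.domain) (hx₂ : x ∈ d₂.domain)
      (hx₁ : x ∈ d₁.adjoint.domain) (y : H₂) (hy₂ : y ∈ d₂.domain)
      (hy₁ : y ∈ d₁.adjoint.domain),
      ⟪Δ ⟨x, hx⟩, y⟫ = ⟪d₂ ⟨x, hx₂⟩, d₂ ⟨y, hy₂⟩⟫ +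
        ⟪d₁.adjoint ⟨x, hx₁⟩, d₁.adjoint ⟨y, hy₁⟩⟫ := by
    intro x hx hx₂ hx₁ y hy₂ hy₁
    obtain ⟨h₂, h₁, h₂', h₁'⟩ := (hΔdom x).mp hx
    rw [hΔval x hx hx₂ hx₁ h₂' h₁', inner_add_left]
    congr 1
    · exact LinearPMap.adjoint_isFormalAdjoint hd₂ ⟨d₂ ⟨x, hx₂⟩, h₂'⟩ ⟨y, hy₂⟩
    · exact HodgeAux.formal_symm d₁ hd₁ ⟨d₁.adjoint ⟨x, hx₁⟩, h₁'⟩ ⟨y, hy₁⟩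
  -- the central solvability statement: `1 + Δ` is surjective
  have solve : ∀ f : H₂, ∃ (u : H₂) (hu : u ∈ Δ.domain), u + Δ ⟨u, hu⟩ = f := by
    intro f
    set F₀ : WithLp 2 (WithLp 2 (H₂ × H₃) × H₁) := ι f 0 0 with hF₀
    set pr : WithLp 2 (WithLp 2 (H₂ × H₃) × H₁) := ((Submodule.orthogonalProjectionOnto K F₀ : K) : WithLp 2 (WithLp 2 (H₂ × H₃) × H₁)) with hpr
    have hprK : pr ∈ K := (Submodule.orthogonalProjectionOnto K F₀).2
    set u : H₂ := pr.fst.fst with hu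
    have hprK' : (u, pr.fst.snd) ∈ d₂.graph ∧ (u, pr.snd) ∈ d₁.adjoint.graph := hprK
    obtain ⟨h₂, hval₂⟩ := (HodgeAux.mem_graph_iff'' d₂).mp hprK'.1
    obtain ⟨h₁, hval₁⟩ := (HodgeAux.mem_graph_iff'' d₁.adjoint).mp hprK'.2
    set v : H₂ := f - u with hv
    -- the weak equation from the orthogonal projection
    have weak : ∀ (x : H₂) (hx₂ : x ∈ d₂.domain) (hx₁ : x ∈ d₁.adjoint.domain),
        ⟪v, x⟫ = ⟪d₂ ⟨u, h₂⟩, d₂ ⟨x, hx₂⟩⟫ +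
          ⟪d₁.adjoint ⟨u, h₁⟩, d₁.adjoint ⟨x, hx₁⟩⟫ := by
      intro x hx₂ hx₁
      have hxK : ι x (d₂ ⟨x, hx₂⟩) (d₁.adjoint ⟨x, hx₁⟩) ∈ K :=
        (hKmem _ _ _).mpr ⟨(HodgeAux.mem_graph_iff'' d₂).mpr ⟨hx₂, rfl⟩,
          (HodgeAux.mem_graph_iff'' d₁.adjoint).mpr ⟨hx₁, rfl⟩⟩
      have h0 := Submodule.starProjection_inner_eq_zero F₀ _ hxK
      rw [inner_sub_left, Submodule.starProjection_apply, ← hpr] at h0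
      have e1 : ⟪F₀, ι x (d₂ ⟨x, hx₂⟩) (d₁.adjoint ⟨x, hx₁⟩)⟫ = ⟪f, x⟫ := by
        show ⟪f, x⟫ + ⟪(0 : H₃), d₂ ⟨x, hx₂⟩⟫ + ⟪(0 : H₁), d₁.adjoint ⟨x, hx₁⟩⟫ = ⟪f, x⟫
        rw [inner_zero_left, inner_zero_left, add_zero, add_zero]
      have e2 : ⟪pr, ι x (d₂ ⟨x, hx₂⟩) (d₁.adjoint ⟨x, hx₁⟩)⟫ =
          ⟪u, x⟫ + ⟪d₂ ⟨u, h₂⟩, d₂ ⟨x, hx₂⟩⟫ +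
            ⟪d₁.adjoint ⟨u, h₁⟩, d₁.adjoint ⟨x, hx₁⟩⟫ := by
        show ⟪u, x⟫ + ⟪pr.fst.snd, d₂ ⟨x, hx₂⟩⟫ + ⟪pr.snd, d₁.adjoint ⟨x, hx₁⟩⟫ = _
        rw [hval₂, hval₁]
      rw [e1, e2] at h0
      rw [hv, inner_sub_left]
      linear_combination h0
    -- (a) `d₂ u` belongs to the domain of `d₂†`
    set w₂ : H₂ := (Submodule.orthogonalProjectionOnto N₁ v : H₂) with hw₂
    have hstep_a : ∀ x : d₂.domain, ⟪w₂, (x : H₂)⟫ = ⟪d₂ ⟨u, h₂⟩, d₂ x⟫ := by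
      intro x
      set x₁ : H₂ := (Submodule.orthogonalProjectionOnto N₁ (x : H₂) : H₂) with hx₁def
      have hx₁N₁ : x₁ ∈ N₁ := by rw [hx₁def]; exact Submodule.coe_mem _
      have hdiff : (x : H₂) - x₁ ∈ N₁ᗮ := by
        rw [hx₁def]; exact Submodule.sub_starProjection_mem_orthogonal _
      obtain ⟨hd, hd0⟩ := (hN₂mem _).mp (hoN₁ hdiff)
      have hx₁dom : x₁ ∈ d₂.domain := by
        have hrw : x₁ = (x : H₂) - ((x : H₂) - x₁) := by abel
        rw [hrw]; exact sub_mem x.2 hd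
      have hx₁val : d₂ ⟨x₁, hx₁dom⟩ = d₂ x := by
        have hsub : (⟨x₁, hx₁dom⟩ : d₂.domain) = ⟨(x : H₂), x.2⟩ - ⟨(x : H₂) - x₁, hd⟩ := by
          apply Subtype.ext
          simp only [AddSubgroupClass.coe_sub]
          abel
        rw [hsub, LinearPMap.map_sub, hd0, sub_zero]
      obtain ⟨hx₁a, hx₁a0⟩ := hN₁adj x₁ hx₁N₁
      have hw := weak x₁ hx₁dom hx₁a
      rw [hx₁val, hx₁a0, inner_zero_right, add_zero] at hw
      calc ⟪w₂, (x : H₂)⟫ = ⟪v, x₁⟫ :=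
            Submodule.inner_starProjection_left_eq_right N₁ v (x : H₂)
        _ = ⟪d₂ ⟨u, h₂⟩, d₂ x⟫ := hw
    obtain ⟨hu₂', hu₂val⟩ := HodgeAux.adjoint_mem_and_eq d₂ hd₂ (d₂ ⟨u, h₂⟩) w₂ hstep_a
    -- (b) `d₁† u` belongs to the domain of `d₁`
    set w₁ : H₂ := (Submodule.orthogonalProjectionOnto N₂ v : H₂) with hw₁
    have hstep_b : ∀ x : d₁.adjoint.domain,
        ⟪w₁, (x : H₂)⟫ = ⟪d₁.adjoint ⟨u, h₁⟩, d₁.adjoint x⟫ := by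
      intro x
      set x₁ : H₂ := (Submodule.orthogonalProjectionOnto N₂ (x : H₂) : H₂) with hx₁def
      have hx₁N₂ : x₁ ∈ N₂ := by rw [hx₁def]; exact Submodule.coe_mem _
      obtain ⟨hx₁dom, hx₁0⟩ := (hN₂mem _).mp hx₁N₂
      have hdiff : (x : H₂) - x₁ ∈ N₂ᗮ := by
        rw [hx₁def]; exact Submodule.sub_starProjection_mem_orthogonal _
      obtain ⟨hda, hda0⟩ := hN₁adj _ (hoN₂ hdiff)
      have hx₁a : x₁ ∈ d₁.adjoint.domain := by
        have hrw : x₁ = (x : H₂) - ((x : H₂) - x₁) := by abel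
        rw [hrw]; exact sub_mem x.2 hda
      have hx₁aval : d₁.adjoint ⟨x₁, hx₁a⟩ = d₁.adjoint x := by
        have hsub : (⟨x₁, hx₁a⟩ : d₁.adjoint.domain) =
            ⟨(x : H₂), x.2⟩ - ⟨(x : H₂) - x₁, hda⟩ := by
          apply Subtype.ext
          simp only [AddSubgroupClass.coe_sub]
          abel
        rw [hsub, LinearPMap.map_sub, hda0, sub_zero]
      have hw := weak x₁ hx₁dom hx₁a
      rw [hx₁aval, hx₁0, inner_zero_right, zero_add] at hw
      calc ⟪w₁, (x : H₂)⟫ = ⟪v, x₁⟫ :=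
            Submodule.inner_starProjection_left_eq_right N₂ v (x : H₂)
        _ = ⟪d₁.adjoint ⟨u, h₁⟩, d₁.adjoint x⟫ := hw
    obtain ⟨hu₁', hu₁val⟩ :=
      HodgeAux.mem_of_forall_adjoint d₁ hd₁ hd₁c (d₁.adjoint ⟨u, h₁⟩) w₁ hstep_b
    -- `u` belongs to the domain of `Δ` with `Δ u = w₂ + w₁`
    have huΔ : u ∈ Δ.domain := (hΔdom u).mpr ⟨h₂, h₁, hu₂', hu₁'⟩
    have hΔu : Δ ⟨u, huΔ⟩ = w₂ + w₁ := by
      rw [hΔval u huΔ h₂ h₁ hu₂' hu₁', hu₂val, hu₁val]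
    -- finally, `w₂ + w₁ = v`
    have hvperp : ∀ y : H₂, y ∈ N₁ → y ∈ N₂ → ⟪v, y⟫ = 0 := by
      intro y hy₁ hy₂
      obtain ⟨hyd, hy0⟩ := (hN₂mem y).mp hy₂
      obtain ⟨hya, hya0⟩ := hN₁adj y hy₁
      have hw := weak y hyd hya
      rwa [hy0, hya0, inner_zero_right, inner_zero_right, add_zero] at hw
    set hh : H₂ := v - w₂ - w₁ with hhdef
    have hw₂N₁ : w₂ ∈ N₁ := by rw [hw₂]; exact Submodule.coe_mem _
    have hw₁N₂ : w₁ ∈ N₂ := by rw [hw₁]; exact Submodule.coe_mem _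
    have hhN₁ : hh ∈ N₁ := by
      have h1 : v - w₁ ∈ N₂ᗮ := by
        rw [hw₁]; exact Submodule.sub_starProjection_mem_orthogonal v
      have h2 : v - w₁ ∈ N₁ := hoN₂ h1
      have hrw : hh = (v - w₁) - w₂ := by rw [hhdef]; abel
      rw [hrw]
      exact sub_mem h2 hw₂N₁
    have hhN₂ : hh ∈ N₂ := by
      have h1 : v - w₂ ∈ N₁ᗮ := by
        rw [hw₂]; exact Submodule.sub_starProjection_mem_orthogonal v
      have h2 : v - w₂ ∈ N₂ := hoN₁ h1
      exact sub_mem h2 hw₁N₂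
    have hvh : ⟪v, hh⟫ = 0 := hvperp hh hhN₁ hhN₂
    have hw₂h : ⟪w₂, hh⟫ = 0 := by
      rw [hw₂, ← Submodule.starProjection_apply, Submodule.inner_starProjection_left_eq_right N₁ v hh,
        Submodule.starProjection_eq_self_iff.mpr hhN₁]
      exact hvh
    have hw₁h : ⟪w₁, hh⟫ = 0 := by
      rw [hw₁, ← Submodule.starProjection_apply, Submodule.inner_starProjection_left_eq_right N₂ v hh,
        Submodule.starProjection_eq_self_iff.mpr hhN₂]
      exact hvh
    have hh0 : hh = 0 := by
      have : ⟪hh, hh⟫ = 0 := by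
        rw [hhdef, inner_sub_left, inner_sub_left, hvh, hw₂h, hw₁h]
        ring
      exact inner_self_eq_zero.mp this
    have hsum : w₂ + w₁ = v := by
      have h6 : v - (w₂ + w₁) = 0 := by
        rw [show v - (w₂ + w₁) = v - w₂ - w₁ by abel, ← hhdef]
        exact hh0
      exact (sub_eq_zero.mp h6).symm
    refine ⟨u, huΔ, ?_⟩
    rw [hΔu, hsum, hv]
    abel
  -- extraction of domain memberships
  have hdomsub : ∀ x : H₂, x ∈ Δ.domain → x ∈ d₂.domain ∧ x ∈ d₁.adjoint.domain := by
    intro x hx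
    obtain ⟨h₂, h₁, -, -⟩ := (hΔdom x).mp hx
    exact ⟨h₂, h₁⟩
  -- non-negativity
  have hnonneg : ∀ x : Δ.domain, 0 ≤ ⟪Δ x, (x : H₂)⟫ := by
    intro x
    obtain ⟨hx₂, hx₁⟩ := hdomsub x x.2
    have h1 := key_sym x x.2 hx₂ hx₁ x hx₂ hx₁
    have h2 : ⟪Δ x, (x : H₂)⟫ =
        ((‖d₂ ⟨(x : H₂), hx₂⟩‖ ^ 2 + ‖d₁.adjoint ⟨(x : H₂), hx₁⟩‖ ^ 2 : ℝ) : ℂ) := by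
      rw [show (Δ x) = Δ ⟨(x : H₂), x.2⟩ from rfl, h1, inner_self_eq_norm_sq_to_K,
        inner_self_eq_norm_sq_to_K]
      norm_cast
    rw [h2]
    exact_mod_cast (by positivity :
      (0 : ℝ) ≤ ‖d₂ ⟨(x : H₂), hx₂⟩‖ ^ 2 + ‖d₁.adjoint ⟨(x : H₂), hx₁⟩‖ ^ 2)
  -- density of the domain of Δ
  have hΔdense : Dense (Δ.domain : Set H₂) := by
    rw [Submodule.dense_iff_topologicalClosure_eq_top,
      Submodule.topologicalClosure_eq_top_iff, Submodule.eq_bot_iff]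
    intro y hy
    obtain ⟨u, hu, hsum⟩ := solve y
    have h0 : ⟪u, y⟫ = 0 := (Submodule.mem_orthogonal _ y).mp hy u hu
    have h1 : ⟪u, u⟫ + ⟪u, Δ ⟨u, hu⟩⟫ = 0 := by
      rw [← inner_add_right, hsum]
      exact h0
    have hre := congrArg Complex.re h1
    simp only [Complex.add_re, Complex.zero_re] at hre
    have h2 : 0 ≤ (⟪Δ ⟨u, hu⟩, u⟫).re := by
      have := (Complex.le_def.mp (hnonneg ⟨u, hu⟩)).1
      simpa using this
    have h3 : (⟪u, Δ ⟨u, hu⟩⟫).re = (⟪Δ ⟨u, hu⟩, u⟫).re := by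
      rw [← inner_conj_symm u (Δ ⟨u, hu⟩ : H₂)]
      exact Complex.conj_re _
    have h4 : (⟪u, u⟫).re = ‖u‖ ^ 2 := by
      simpa using inner_self_eq_norm_sq (𝕜 := ℂ) u
    have hu0 : u = 0 := by
      have h5 : ‖u‖ ^ 2 ≤ 0 := by
        rw [← h4]
        rw [h3] at hre
        linarith
      have := sq_nonneg ‖u‖
      have h6 : ‖u‖ ^ 2 = 0 := le_antisymm h5 this
      simpa using pow_eq_zero_iff (n := 2) (by norm_num) |>.mp h6
    have huz : (⟨u, hu⟩ : Δ.domain) = 0 := Subtype.ext hu0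
    rw [← hsum, huz, LinearPMap.map_zero, hu0, add_zero]
  -- symmetry of Δ
  have hsym : Δ.IsFormalAdjoint Δ := by
    intro x y
    obtain ⟨hx₂, hx₁⟩ := hdomsub x x.2
    obtain ⟨hy₂, hy₁⟩ := hdomsub y y.2
    have h1 := key_sym x x.2 hx₂ hx₁ y hy₂ hy₁
    have h2 := key_sym y y.2 hy₂ hy₁ x hx₂ hx₁
    calc ⟪Δ x, (y : H₂)⟫
        = ⟪d₂ ⟨(x : H₂), hx₂⟩, d₂ ⟨(y : H₂), hy₂⟩⟫ +
            ⟪d₁.adjoint ⟨(x : H₂), hx₁⟩, d₁.adjoint ⟨(y : H₂), hy₁⟩⟫ := h1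
      _ = (starRingEnd ℂ) ⟪Δ ⟨(y : H₂), y.2⟩, (x : H₂)⟫ := by
          rw [h2]
          simp only [_root_.map_add, inner_conj_symm]
      _ = ⟪(x : H₂), Δ y⟫ := inner_conj_symm _ _
  have hle : Δ ≤ Δ.adjoint := hsym.le_adjoint hΔdense
  have hdomle : Δ.adjoint.domain ≤ Δ.domain := by
    intro y hy
    set w : H₂ := Δ.adjoint ⟨y, hy⟩ with hwdef
    obtain ⟨u, hu, hsum⟩ := solve (y + w)
    have hz : ∀ x : Δ.domain, ⟪y - u, (x : H₂) + Δ x⟫ = 0 := by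
      intro x
      rw [inner_sub_left, inner_add_right, inner_add_right]
      have ha : ⟪y, Δ x⟫ = ⟪w, (x : H₂)⟫ :=
        (LinearPMap.adjoint_isFormalAdjoint hΔdense ⟨y, hy⟩ x).symm
      have hb : ⟪u, Δ x⟫ = ⟪Δ ⟨u, hu⟩, (x : H₂)⟫ := (hsym ⟨u, hu⟩ x).symm
      have hc : ⟪(y + w) - (u + Δ ⟨u, hu⟩), (x : H₂)⟫ = 0 := by
        rw [← hsum, sub_self, inner_zero_left]
      rw [inner_sub_left, inner_add_left, inner_add_left] at hc
      rw [ha, hb]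
      linear_combination hc
    have hz2 : y - u = 0 := by
      obtain ⟨x, hx, hxx⟩ := solve (y - u)
      have h6 : ⟪y - u, x + Δ ⟨x, hx⟩⟫ = 0 := hz ⟨x, hx⟩
      rw [hxx] at h6
      exact inner_self_eq_zero.mp h6
    have : y = u := sub_eq_zero.mp hz2
    rw [this]
    exact hu
  have hge : Δ.adjoint ≤ Δ := ⟨hdomle, fun x y hxy => (hle.2 hxy.symm).symm⟩
  exact ⟨hΔdense, le_antisymm hge hle, hnonneg⟩
end

section
/- Let H₁, H₂, H₃ be complex Hilbert spaces and d₁ : H₁ → H₂, d₂ : H₂ → H₃ densely defined closed operators with the complex property. Then H₂ is the orthogonal direct sum of three mutually orthogonal closed subspaces: the space of harmonic fields 𝓗 = {x ∈ D(d₂) ∩ D(d₁†) : d₂x = 0 and d₁†x = 0}, the closure of the range of d₁, and the closure of the range of d₂†. -/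
open scoped ComplexInnerProductSpace



section HodgeAux
variable {E F : Type*}
  [NormedAddCommGroup E] [InnerProductSpace ℂ E] [CompleteSpace E]
  [NormedAddCommGroup F] [InnerProductSpace ℂ F] [CompleteSpace F]

/-- If `⟪y, T x⟫ = 0` for all `x` in the (dense) domain of `T`, then `y` lies in the domain
of the adjoint and `T† y = 0`. -/
lemma hodge_aux_adjoint_zero {T : E →ₗ.[ℂ] F} (hT : Dense (T.domain : Set E)) {y : F}
    (h : ∀ x : T.domain, ⟪y, T x⟫ = 0) :
    ∃ hy : y ∈ T.adjoint.domain, T.adjoint ⟨y, hy⟩ = 0 := by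
  have hy : y ∈ T.adjoint.domain :=
    LinearPMap.mem_adjoint_domain_of_exists y ⟨0, fun x => by simp [h x]⟩
  exact ⟨hy, LinearPMap.adjoint_apply_eq hT ⟨y, hy⟩ (fun x => by simp [h x])⟩

/-- If `T` is densely defined and closed and `x ⟂ ran T†`, then `x ∈ D(T)` with `T x = 0`. -/
lemma hodge_aux_mem_kernel {T : E →ₗ.[ℂ] F} (hT : Dense (T.domain : Set E))
    (hTc : T.IsClosed) {x : E}
    (h : ∀ y : T.adjoint.domain, ⟪(T.adjoint y : E), x⟫ = 0) :
    ∃ hx : x ∈ T.domain, T ⟨x, hx⟩ = 0 := by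
  let e := WithLp.linearEquiv 2 ℂ (E × F)
  let K : Submodule ℂ (WithLp 2 (E × F)) := T.graph.map (e.symm : (E × F) →ₗ[ℂ] _)
  have hmemK : ∀ w : WithLp 2 (E × F), w ∈ K ↔ e w ∈ T.graph := by
    intro w
    constructor
    · rintro ⟨g, hg, rfl⟩
      simpa using hg
    · intro hw
      exact ⟨e w, hw, by simp⟩
  have hKc : IsClosed (K : Set (WithLp 2 (E × F))) := by
    have : (K : Set (WithLp 2 (E × F))) =
        (WithLp.prodContinuousLinearEquiv 2 ℂ E F) ⁻¹' (T.graph : Set (E × F)) := by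
      ext w; exact hmemK w
    rw [this]
    exact hTc.preimage (WithLp.prodContinuousLinearEquiv 2 ℂ E F).continuous
  haveI : CompleteSpace K := hKc.completeSpace_coe
  set w₀ : WithLp 2 (E × F) := e.symm (x, 0) with hw₀
  have hw₀mem : w₀ ∈ Kᗮᗮ := by
    rw [Submodule.mem_orthogonal]
    intro u hu
    set a : E := (e u).1 with ha
    set b : F := (e u).2 with hb
    have key : ∀ p : T.domain, ⟪a, (p : E)⟫ + ⟪b, T p⟫ = 0 := by
      intro p
      have hp : (e.symm ((p : E), T p)) ∈ K := (hmemK _).mpr (by simpa using T.mem_graph p)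
      have := (Submodule.mem_orthogonal' _ _).mp hu _ hp
      exact this
    have hbmem : b ∈ T.adjoint.domain := by
      refine LinearPMap.mem_adjoint_domain_of_exists b ⟨-a, fun p => ?_⟩
      have := key p
      rw [inner_neg_left]
      linear_combination -this
    have hTb : T.adjoint ⟨b, hbmem⟩ = -a := by
      refine LinearPMap.adjoint_apply_eq hT _ (fun p => ?_)
      have := key p
      rw [inner_neg_left]
      linear_combination -this
    have hax : ⟪a, x⟫ = 0 := by
      have := h ⟨b, hbmem⟩
      rw [hTb, inner_neg_left] at this
      exact neg_eq_zero.mp this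
    have huw : ⟪u, w₀⟫ = ⟪a, x⟫ + ⟪b, (0 : F)⟫ := rfl
    rw [huw, hax, inner_zero_right, add_zero]
  rw [Submodule.orthogonal_orthogonal] at hw₀mem
  have : ((x, (0 : F)) : E × F) ∈ T.graph := by
    have := (hmemK w₀).mp hw₀mem
    simpa [hw₀] using this
  rw [LinearPMap.mem_graph_iff] at this
  obtain ⟨p, hp1, hp2⟩ := this
  have hx' : x ∈ T.domain := by rw [show x = ((p : E)) from hp1.symm]; exact p.2
  refine ⟨hx', ?_⟩
  have hpe : (⟨x, hx'⟩ : T.domain) = p := Subtype.ext hp1.symm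
  rw [hpe]
  exact hp2

lemma hodge_aux_orth_closure {E : Type*} [NormedAddCommGroup E] [InnerProductSpace ℂ E]
    (K : Submodule ℂ E) : (K.topologicalClosure)ᗮ = Kᗮ := by
  refine le_antisymm (Submodule.orthogonal_le K.le_topologicalClosure) ?_
  intro x hx
  rw [Submodule.mem_orthogonal]
  intro u hu
  have hclosed : IsClosed {v : E | ⟪v, x⟫ = 0} :=
    isClosed_eq (Continuous.inner continuous_id continuous_const) continuous_const
  have hsub : (K : Set E) ⊆ {v : E | ⟪v, x⟫ = 0} := fun v hv =>
    (Submodule.mem_orthogonal K x).mp hx v hv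
  have := closure_minimal hsub hclosed
  have hu' : u ∈ closure (K : Set E) := by
    rw [← Submodule.topologicalClosure_coe]; exact hu
  exact this hu'


end HodgeAux

/-- Hodge decomposition (Kodaira decomposition): for a two-term complex of densely defined
closed operators between complex Hilbert spaces, `H₂` decomposes as the orthogonal direct
sum of the harmonic fields, the closure of the range of `d₁`, and the closure of the range
of `d₂†`. -/
theorem hodge_kodaira_decomposition
    {H₁ H₂ H₃ : Type*}
    [NormedAddCommGroup H₁] [InnerProductSpace ℂ H₁] [CompleteSpace H₁]
    [NormedAddCommGroup H₂] [InnerProductSpace ℂ H₂] [CompleteSpace H₂]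
    [NormedAddCommGroup H₃] [InnerProductSpace ℂ H₃] [CompleteSpace H₃]
    (d₁ : H₁ →ₗ.[ℂ] H₂) (d₂ : H₂ →ₗ.[ℂ] H₃)
    (hd₁ : Dense (d₁.domain : Set H₁)) (hd₂ : Dense (d₂.domain : Set H₂))
    (hd₁c : d₁.IsClosed) (hd₂c : d₂.IsClosed)
    -- the complex property: `d₂ ∘ d₁ = 0`
    (hmem : ∀ x : d₁.domain, d₁ x ∈ d₂.domain)
    (hcomp : ∀ (x : d₁.domain) (h : d₁ x ∈ d₂.domain), d₂ ⟨d₁ x, h⟩ = 0)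
    -- the space of harmonic fields and the ranges of `d₁` and of `d₂†`:
    (Harm R₁ R₂ : Set H₂)
    (hHarm : Harm = {x : H₂ | ∃ (h₂ : x ∈ d₂.domain) (h₁ : x ∈ d₁.adjoint.domain),
      d₂ ⟨x, h₂⟩ = 0 ∧ d₁.adjoint ⟨x, h₁⟩ = 0})
    (hR₁ : R₁ = Set.range fun x : d₁.domain => d₁ x)
    (hR₂ : R₂ = Set.range fun y : d₂.adjoint.domain => d₂.adjoint y) :
    IsClosed Harm ∧
    (∀ x ∈ Harm, ∀ y ∈ closure R₁, ⟪x, y⟫ = 0) ∧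
    (∀ x ∈ Harm, ∀ y ∈ closure R₂, ⟪x, y⟫ = 0) ∧
    (∀ x ∈ closure R₁, ∀ y ∈ closure R₂, ⟪x, y⟫ = 0) ∧
    (∀ z : H₂, ∃ a ∈ Harm, ∃ b ∈ closure R₁, ∃ c ∈ closure R₂, z = a + b + c) := by
  have fa₁ := LinearPMap.adjoint_isFormalAdjoint hd₁
  have fa₂ := LinearPMap.adjoint_isFormalAdjoint hd₂
  set N₁ : Submodule ℂ H₂ := LinearMap.range d₁.toFun with hN₁
  set N₂ : Submodule ℂ H₂ := LinearMap.range d₂.adjoint.toFun with hN₂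
  set M₁ : Submodule ℂ H₂ := N₁.topologicalClosure with hM₁
  set M₂ : Submodule ℂ H₂ := N₂.topologicalClosure with hM₂
  -- set identifications
  have hN₁set : (N₁ : Set H₂) = R₁ := by
    rw [hR₁, hN₁, LinearMap.coe_range]; rfl
  have hN₂set : (N₂ : Set H₂) = R₂ := by
    rw [hR₂, hN₂, LinearMap.coe_range]; rfl
  have hM₁set : (M₁ : Set H₂) = closure R₁ := by
    rw [hM₁, Submodule.topologicalClosure_coe, hN₁set]
  have hM₂set : (M₂ : Set H₂) = closure R₂ := by
    rw [hM₂, Submodule.topologicalClosure_coe, hN₂set]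
  -- range d₂† ⟂ range d₁
  have h12 : ∀ (v : d₂.adjoint.domain) (u : d₁.domain),
      ⟪(d₂.adjoint v : H₂), (d₁ u : H₂)⟫ = 0 := by
    intro v u
    have := fa₂ v ⟨d₁ u, hmem u⟩
    rw [hcomp u (hmem u)] at this
    simpa using this
  have hN₂M₁ : N₂ ≤ M₁ᗮ := by
    rintro _ ⟨v, rfl⟩
    rw [hM₁, hodge_aux_orth_closure, Submodule.mem_orthogonal']
    rintro _ ⟨u, rfl⟩
    exact h12 v u
  have hM₂M₁ : M₂ ≤ M₁ᗮ :=
    N₂.topologicalClosure_minimal hN₂M₁ (M₁.isClosed_orthogonal)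
  have hM₁M₂ : M₁ ≤ M₂ᗮ := Submodule.IsOrtho.symm (Submodule.isOrtho_iff_le.mpr hM₂M₁)
  -- characterization of Harm
  have harm_of : ∀ x : H₂, x ∈ M₁ᗮ → x ∈ M₂ᗮ → x ∈ Harm := by
    intro x hx1 hx2
    have hx1' : ∀ u : d₁.domain, ⟪x, (d₁ u : H₂)⟫ = 0 := by
      intro u
      rw [inner_eq_zero_symm]
      exact (Submodule.mem_orthogonal M₁ x).mp hx1 _
        (N₁.le_topologicalClosure ⟨u, rfl⟩)
    have hx2' : ∀ v : d₂.adjoint.domain, ⟪(d₂.adjoint v : H₂), x⟫ = 0 := by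
      intro v
      exact (Submodule.mem_orthogonal M₂ x).mp hx2 _
        (N₂.le_topologicalClosure ⟨v, rfl⟩)
    obtain ⟨h₁, hA₁⟩ := hodge_aux_adjoint_zero hd₁ hx1'
    obtain ⟨h₂, hA₂⟩ := hodge_aux_mem_kernel hd₂ hd₂c hx2'
    rw [hHarm]
    exact ⟨h₂, h₁, hA₂, hA₁⟩
  have of_harm : ∀ x ∈ Harm, x ∈ M₁ᗮ ∧ x ∈ M₂ᗮ := by
    intro x hx
    rw [hHarm] at hx
    obtain ⟨h₂, h₁, hA₂, hA₁⟩ := hx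
    constructor
    · rw [hM₁, hodge_aux_orth_closure, Submodule.mem_orthogonal]
      rintro _ ⟨u, rfl⟩
      rw [inner_eq_zero_symm]
      have h' := fa₁ ⟨x, h₁⟩ u
      rw [hA₁, inner_zero_left] at h'
      exact h'.symm
    · rw [hM₂, hodge_aux_orth_closure, Submodule.mem_orthogonal]
      rintro _ ⟨v, rfl⟩
      have h' := fa₂ v ⟨x, h₂⟩
      rw [hA₂, inner_zero_right] at h'
      exact h'
  refine ⟨?_, ?_, ?_, ?_, ?_⟩
  · -- Harm is closed
    have : Harm = (M₁ᗮ ⊓ M₂ᗮ : Submodule ℂ H₂) := by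
      ext x
      constructor
      · intro hx
        exact ⟨(of_harm x hx).1, (of_harm x hx).2⟩
      · rintro ⟨hx1, hx2⟩
        exact harm_of x hx1 hx2
    rw [this]
    exact IsClosed.inter M₁.isClosed_orthogonal M₂.isClosed_orthogonal
  · intro x hx y hy
    rw [← hM₁set] at hy
    rw [inner_eq_zero_symm]
    exact (Submodule.mem_orthogonal M₁ x).mp (of_harm x hx).1 y hy
  · intro x hx y hy
    rw [← hM₂set] at hy
    rw [inner_eq_zero_symm]
    exact (Submodule.mem_orthogonal M₂ x).mp (of_harm x hx).2 y hy
  · intro x hx y hy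
    rw [← hM₁set] at hx
    rw [← hM₂set] at hy
    rw [inner_eq_zero_symm]
    exact (Submodule.mem_orthogonal M₂ x).mp (hM₁M₂ (show x ∈ M₁ from hx)) y hy
  · intro z
    haveI : CompleteSpace M₁ := N₁.isClosed_topologicalClosure.completeSpace_coe
    haveI : CompleteSpace M₂ := N₂.isClosed_topologicalClosure.completeSpace_coe
    set b : H₂ := (Submodule.orthogonalProjection M₁ z : H₂) with hbdef
    set c : H₂ := (Submodule.orthogonalProjection M₂ z : H₂) with hcdef
    set a : H₂ := z - b - c with hadef
    have hbM : b ∈ M₁ := (Submodule.orthogonalProjection M₁ z).2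
    have hcM : c ∈ M₂ := (Submodule.orthogonalProjection M₂ z).2
    have ha1 : a ∈ M₁ᗮ := by
      have h1 : z - b ∈ M₁ᗮ := Submodule.sub_starProjection_mem_orthogonal z
      have h2 : c ∈ M₁ᗮ := hM₂M₁ hcM
      exact Submodule.sub_mem _ h1 h2
    have ha2 : a ∈ M₂ᗮ := by
      have h1 : z - c ∈ M₂ᗮ := Submodule.sub_starProjection_mem_orthogonal z
      have h2 : b ∈ M₂ᗮ := hM₁M₂ hbM
      have : a = (z - c) - b := by rw [hadef]; abel
      rw [this]
      exact Submodule.sub_mem _ h1 h2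
    refine ⟨a, harm_of a ha1 ha2, b, ?_, c, ?_, by rw [hadef]; abel⟩
    · rw [← hM₁set]; exact hbM
    · rw [← hM₂set]; exact hcM
end

section
/- Let H₁, H₂, H₃ be complex Hilbert spaces and d₁ : H₁ → H₂, d₂ : H₂ → H₃ densely defined closed operators with the complex property. Then the closed subspace ker d₂ = {x ∈ D(d₂) : d₂x = 0} of H₂ is the orthogonal direct sum of the space of harmonic fields 𝓗 = {x ∈ D(d₂) ∩ D(d₁†) : d₂x = 0 and d₁†x = 0} and the closure of the range of d₁; in particular, if the range of d₁ is closed, then ker d₂ = 𝓗 ⊕ ran d₁ (orthogonal direct sum), so every cohomology class of the complex has a unique harmonic representative. -/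
open scoped ComplexInnerProductSpace

/-- For a two-term complex of densely defined closed operators between complex Hilbert
spaces, the kernel of `d₂` is the orthogonal direct sum of the space of harmonic fields
and the closure of the range of `d₁`; in particular, if the range of `d₁` is closed, then
every element of `ker d₂` has a unique harmonic representative modulo `ran d₁`. -/
theorem hodge_ker_decomposition
    {H₁ H₂ H₃ : Type*}
    [NormedAddCommGroup H₁] [InnerProductSpace ℂ H₁] [CompleteSpace H₁]
    [NormedAddCommGroup H₂] [InnerProductSpace ℂ H₂] [CompleteSpace H₂]
    [NormedAddCommGroup H₃] [InnerProductSpace ℂ H₃] [CompleteSpace H₃]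
    (d₁ : H₁ →ₗ.[ℂ] H₂) (d₂ : H₂ →ₗ.[ℂ] H₃)
    (hd₁ : Dense (d₁.domain : Set H₁)) (hd₂ : Dense (d₂.domain : Set H₂))
    (hd₁c : d₁.IsClosed) (hd₂c : d₂.IsClosed)
    -- the complex property: `d₂ ∘ d₁ = 0`
    (hmem : ∀ x : d₁.domain, d₁ x ∈ d₂.domain)
    (hcomp : ∀ (x : d₁.domain) (h : d₁ x ∈ d₂.domain), d₂ ⟨d₁ x, h⟩ = 0)
    -- the space of harmonic fields, the range of `d₁`, and the kernel of `d₂`: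
    (Harm R₁ K : Set H₂)
    (hHarm : Harm = {x : H₂ | ∃ (h₂ : x ∈ d₂.domain) (h₁ : x ∈ d₁.adjoint.domain),
      d₂ ⟨x, h₂⟩ = 0 ∧ d₁.adjoint ⟨x, h₁⟩ = 0})
    (hR₁ : R₁ = Set.range fun x : d₁.domain => d₁ x)
    (hK : K = {x : H₂ | ∃ h : x ∈ d₂.domain, d₂ ⟨x, h⟩ = 0}) :
    (∀ x ∈ Harm, ∀ y ∈ closure R₁, ⟪x, y⟫ = 0) ∧
    (K = {z : H₂ | ∃ a ∈ Harm, ∃ b ∈ closure R₁, z = a + b}) ∧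
    (IsClosed R₁ →
      (K = {z : H₂ | ∃ a ∈ Harm, ∃ b ∈ R₁, z = a + b}) ∧
      ∀ z ∈ K, ∃! a : H₂, a ∈ Harm ∧ z - a ∈ R₁) := by
  -- Step 1: orthogonality of harmonic fields and closure of range of d₁
  have horth : ∀ x ∈ Harm, ∀ y ∈ closure R₁, ⟪x, y⟫ = 0 := by
    intro x hx y hy
    rw [hHarm] at hx
    obtain ⟨h₂, h₁, hx2, hx1⟩ := hx
    have hz : ∀ u : d₁.domain, ⟪x, d₁ u⟫ = (0 : ℂ) := fun u => by
      rw [← (LinearPMap.adjoint_isFormalAdjoint hd₁) ⟨x, h₁⟩ u, hx1, inner_zero_left]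
    have hsub : closure R₁ ⊆ {y : H₂ | ⟪x, y⟫ = 0} := by
      apply closure_minimal
      · rw [hR₁]; rintro _ ⟨u, rfl⟩; exact hz u
      · exact isClosed_eq (continuous_const.inner continuous_id) continuous_const
    exact hsub hy
  -- Step 2: if x is orthogonal to the range of d₁, then x ∈ D(d₁†) and d₁† x = 0
  have hadj0 : ∀ x : H₂, (∀ u : d₁.domain, ⟪x, d₁ u⟫ = (0 : ℂ)) →
      ∃ h : x ∈ d₁.adjoint.domain, d₁.adjoint ⟨x, h⟩ = 0 := by
    intro x hx
    have h : x ∈ d₁.adjoint.domain :=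
      LinearPMap.mem_adjoint_domain_of_exists x ⟨0, fun u => by rw [hx u, inner_zero_left]⟩
    exact ⟨h, LinearPMap.adjoint_apply_eq hd₁ ⟨x, h⟩ fun u => by
      rw [hx u, inner_zero_left]⟩
  -- K as a closed submodule
  set Ks : Submodule ℂ H₂ := d₂.graph.comap (LinearMap.prod LinearMap.id 0) with hKs
  have hKmem : ∀ x : H₂, x ∈ K ↔ x ∈ Ks := by
    intro x
    rw [hK, hKs]
    simp only [Set.mem_setOf_eq, Submodule.mem_comap, LinearMap.prod_apply, LinearMap.id_apply,
      LinearMap.zero_apply, Pi.prod, LinearPMap.mem_graph_iff]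
    constructor
    · rintro ⟨h, hh⟩; exact ⟨⟨x, h⟩, rfl, hh⟩
    · rintro ⟨⟨y, hy⟩, h1, h2⟩
      dsimp at h1; subst h1; exact ⟨hy, h2⟩
  have hKsClosed : IsClosed (Ks : Set H₂) := by
    have : (Ks : Set H₂) = (fun x : H₂ => (x, (0 : H₃))) ⁻¹' (d₂.graph : Set (H₂ × H₃)) := rfl
    rw [this]
    exact hd₂c.preimage (Continuous.prodMk continuous_id continuous_const)
  -- range of d₁ as a submodule
  set Rs : Submodule ℂ H₂ := LinearMap.range d₁.toFun with hRs
  have hRscoe : R₁ = (Rs : Set H₂) := by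
    rw [hR₁, hRs, LinearMap.coe_range]; rfl
  have hRK : Rs ≤ Ks := by
    rintro _ ⟨u, rfl⟩
    rw [← hKmem, hK]
    exact ⟨hmem u, hcomp u (hmem u)⟩
  set V : Submodule ℂ H₂ := Rs.topologicalClosure with hV
  have hVcoe : closure R₁ = (V : Set H₂) := by
    rw [hRscoe, hV, Submodule.topologicalClosure_coe]
  have hVK : V ≤ Ks := Submodule.topologicalClosure_minimal _ hRK hKsClosed
  haveI : CompleteSpace V := Rs.isClosed_topologicalClosure.completeSpace_coe
  -- decomposition of K
  have hdecomp : K = {z : H₂ | ∃ a ∈ Harm, ∃ b ∈ closure R₁, z = a + b} := by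
    ext z
    constructor
    · intro hz
      set b : H₂ := (V.orthogonalProjectionOnto z : H₂) with hb
      have hbV : b ∈ V := (V.orthogonalProjectionOnto z).2
      have haperp : z - b ∈ Vᗮ := Submodule.sub_starProjection_mem_orthogonal (K := V) z
      have haK : z - b ∈ Ks := Ks.sub_mem ((hKmem z).1 hz) (hVK hbV)
      have haHarm : z - b ∈ Harm := by
        have hzb : ∀ u : d₁.domain, ⟪z - b, d₁ u⟫ = (0 : ℂ) := by
          intro u
          have hu : d₁ u ∈ V := Rs.le_topologicalClosure ⟨u, rfl⟩
          have := (Submodule.mem_orthogonal V (z - b)).1 haperp _ hu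
          rw [← inner_conj_symm, this, map_zero]
        obtain ⟨h₁, h₁0⟩ := hadj0 _ hzb
        obtain ⟨h₂, h₂0⟩ := (hKmem (z - b)).2 haK |> fun h => hK ▸ h
        · rw [hHarm]
          exact ⟨h₂, h₁, h₂0, h₁0⟩
      refine ⟨z - b, haHarm, b, ?_, by abel⟩
      rw [hVcoe]; exact hbV
    · rintro ⟨a, ha, b, hb, rfl⟩
      rw [hHarm] at ha
      obtain ⟨h₂, _, ha2, _⟩ := ha
      have haK : a ∈ Ks := (hKmem a).1 (hK ▸ ⟨h₂, ha2⟩)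
      have hbV : b ∈ V := by rw [hVcoe] at hb; exact hb
      have hbK : b ∈ Ks := hVK hbV
      exact (hKmem _).2 (Ks.add_mem haK hbK)
  refine ⟨horth, hdecomp, fun hRc => ?_⟩
  have hcl : closure R₁ = R₁ := hRc.closure_eq
  constructor
  · rw [hdecomp, hcl]
  · intro z hz
    rw [hdecomp] at hz
    obtain ⟨a, ha, b, hb, rfl⟩ := hz
    rw [hcl] at hb
    refine ⟨a, ⟨ha, by simpa using hb⟩, ?_⟩
    rintro a' ⟨ha', hd'⟩
    have hdiff : a' - a ∈ R₁ := by
      have : a' - a = (a + b - a) - (a + b - a') := by abel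
      rw [this, hRscoe] at *
      exact Rs.sub_mem (by simpa using hb) hd'
    have h1 : ⟪a', a' - a⟫ = 0 := horth a' ha' _ (subset_closure hdiff)
    have h2 : ⟪a, a' - a⟫ = 0 := horth a ha _ (subset_closure hdiff)
    have : ⟪a' - a, a' - a⟫ = (0 : ℂ) := by
      rw [inner_sub_left, h1, h2, sub_zero]
    have := inner_self_eq_zero.1 this
    have : a' = a := by
      have h := sub_eq_zero.1 this
      exact h
    exact this
end

section
/- Let T and S be self-adjoint unbounded operators on a complex Hilbert space H (densely defined operators equal to their own Hilbert adjoints). Suppose there is a Hilbert basis (complete orthonormal family) (eᵢ)_{i ∈ I} of H and real numbers (μᵢ)_{i ∈ I} such that each eᵢ lies in D(T) ∩ D(S) and T eᵢ = μᵢ eᵢ and S eᵢ = μᵢ eᵢ for every i. Then T = S, i.e. D(T) = D(S) and Tx = Sx for all x in the common domain. -/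
open scoped ComplexConjugate

local notation "⟪" x ", " y "⟫" => @inner ℂ _ _ x y

/-- For a self-adjoint operator `A` with eigenvector `v` of real eigenvalue `m`,
`⟪v, A x⟫ = m * ⟪v, x⟫` for all `x` in the domain. -/
theorem inner_eigen_aux {H : Type*} [NormedAddCommGroup H] [InnerProductSpace ℂ H]
    [CompleteSpace H] (A : H →ₗ.[ℂ] H) (hAd : Dense (A.domain : Set H))
    (hAsa : A.adjoint = A) {v : H} {m : ℝ} (hv : v ∈ A.domain)
    (hAv : A ⟨v, hv⟩ = (m : ℂ) • v) (x : A.domain) :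
    ⟪v, A x⟫ = (m : ℂ) * ⟪v, (x : H)⟫ := by
  have hF := LinearPMap.adjoint_isFormalAdjoint hAd
  have hv' : v ∈ A.adjoint.domain := by rw [hAsa]; exact hv
  obtain ⟨hdom, hfun⟩ := LinearPMap.ext_iff.mp hAsa
  have h1 : A.adjoint ⟨v, hv'⟩ = (m : ℂ) • v := by
    rw [hfun (x := v) (hf := hv') (hg := hv)]; exact hAv
  have h2 := hF ⟨v, hv'⟩ x
  rw [h1, inner_smul_left] at h2
  rw [← h2]
  simp [Complex.conj_ofReal]

/-- One-sided inclusion. -/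
theorem le_aux {H : Type*} [NormedAddCommGroup H] [InnerProductSpace ℂ H] [CompleteSpace H]
    (T S : H →ₗ.[ℂ] H)
    (hTd : Dense (T.domain : Set H)) (hSd : Dense (S.domain : Set H))
    (hTsa : T.adjoint = T) (hSsa : S.adjoint = S)
    {I : Type*} (e : I → H) (μ : I → ℝ)
    (he : Orthonormal ℂ e)
    (hspan : Dense (Submodule.span ℂ (Set.range e) : Set H))
    (heT : ∀ i : I, ∃ h : e i ∈ T.domain, T ⟨e i, h⟩ = (μ i : ℂ) • e i)
    (heS : ∀ i : I, ∃ h : e i ∈ S.domain, S ⟨e i, h⟩ = (μ i : ℂ) • e i) :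
    S ≤ T := by
  have hsp : ⊤ ≤ (Submodule.span ℂ (Set.range e)).topologicalClosure := by
    rw [Submodule.dense_iff_topologicalClosure_eq_top] at hspan
    rw [hspan]
  let b : HilbertBasis I ℂ H := HilbertBasis.mk he hsp
  have hb : ∀ i, b i = e i := fun i => congrFun (HilbertBasis.coe_mk he hsp) i
  have hform : T.IsFormalAdjoint S := by
    intro x y
    have hT' : ∀ i, ⟪T x, e i⟫ = (μ i : ℂ) * ⟪(x : H), e i⟫ := by
      intro i
      obtain ⟨hi, hTi⟩ := heT i
      have := inner_eigen_aux T hTd hTsa hi hTi x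
      calc ⟪T x, e i⟫ = conj ⟪e i, T x⟫ := (inner_conj_symm _ _).symm
        _ = conj ((μ i : ℂ) * ⟪e i, (x : H)⟫) := by rw [this]
        _ = (μ i : ℂ) * ⟪(x : H), e i⟫ := by
            rw [map_mul, inner_conj_symm, Complex.conj_ofReal]
    have hS' : ∀ i, ⟪e i, S y⟫ = (μ i : ℂ) * ⟪e i, (y : H)⟫ := by
      intro i
      obtain ⟨hi, hSi⟩ := heS i
      exact inner_eigen_aux S hSd hSsa hi hSi y
    calc ⟪T x, (y : H)⟫ = ∑' i, ⟪T x, b i⟫ * ⟪b i, (y : H)⟫ :=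
          (b.tsum_inner_mul_inner _ _).symm
      _ = ∑' i, ⟪(x : H), b i⟫ * ⟪b i, S y⟫ := by
          refine tsum_congr fun i => ?_
          rw [hb, hT', hS']
          ring
      _ = ⟪(x : H), S y⟫ := b.tsum_inner_mul_inner _ _
  have := hform.le_adjoint hTd
  rwa [hTsa] at this

/-- Two self-adjoint unbounded operators on a complex Hilbert space possessing a common
spectral resolution (a Hilbert basis of common eigenvectors with the same real
eigenvalues) coincide. -/
theorem selfAdjoint_eq_of_common_eigenbasis
    {H : Type*} [NormedAddCommGroup H] [InnerProductSpace ℂ H] [CompleteSpace H]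
    (T S : H →ₗ.[ℂ] H)
    (hTd : Dense (T.domain : Set H)) (hSd : Dense (S.domain : Set H))
    (hTsa : T.adjoint = T) (hSsa : S.adjoint = S)
    {I : Type*} (e : I → H) (μ : I → ℝ)
    (he : Orthonormal ℂ e)
    (hspan : Dense (Submodule.span ℂ (Set.range e) : Set H))
    (heT : ∀ i : I, ∃ h : e i ∈ T.domain, T ⟨e i, h⟩ = (μ i : ℂ) • e i)
    (heS : ∀ i : I, ∃ h : e i ∈ S.domain, S ⟨e i, h⟩ = (μ i : ℂ) • e i) :
    T = S := by
  exact le_antisymm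
    (le_aux S T hSd hTd hSsa hTsa e μ he hspan heS heT)
    (le_aux T S hTd hSd hTsa hSsa e μ he hspan heT heS)
end

section
/- Fix l > 0, κ > 1, real c, and λ̃ ≥ 0. Let f : (0,l] → ℝ be differentiable with differentiable flux F(x) = xᶜ f′(x) satisfying the Sturm–Liouville equation F′(x) = λ̃ x^{c−2κ} f(x) on (0,l], and assume the finiteness of ∫₀ˡ xᶜ f′(x)² dx and ∫₀ˡ x^{c−2κ} f(x)² dx. Then the limit L₀ = lim_{x→0⁺} xᶜ f(x) f′(x) exists and is finite, and the integration-by-parts identity ∫₀ˡ xᶜ f′(x)² dx + λ̃ ∫₀ˡ x^{c−2κ} f(x)² dx = lᶜ f(l) f′(l) − L₀ holds. -/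
open Set Filter MeasureTheory

/-- Integration by parts for the Sturm–Liouville equation `(xᶜ f′)′ = λ̃ x^{c-2κ} f` on
`(0, l]`: under the finiteness of `∫₀ˡ xᶜ f′² dx` and `∫₀ˡ x^{c-2κ} f² dx`, the flux
`xᶜ f f′` has a finite limit `L₀` at `0⁺` and
`∫₀ˡ xᶜ f′² dx + λ̃ ∫₀ˡ x^{c-2κ} f² dx = lᶜ f(l) f′(l) − L₀`. -/
theorem SL_integration_by_parts (l κ c lam : ℝ) (hl : 0 < l) (hκ : 1 < κ)
    (hlam : 0 ≤ lam) (f f' : ℝ → ℝ)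
    (hderiv : ∀ x ∈ Ioc (0 : ℝ) l, HasDerivWithinAt f (f' x) (Ioc (0 : ℝ) l) x)
    (hflux : ∀ x ∈ Ioc (0 : ℝ) l,
      HasDerivWithinAt (fun t : ℝ => t ^ c * f' t)
        (lam * x ^ (c - 2 * κ) * f x) (Ioc (0 : ℝ) l) x)
    (hint1 : IntegrableOn (fun x : ℝ => x ^ c * f' x ^ 2) (Ioc (0 : ℝ) l))
    (hint2 : IntegrableOn (fun x : ℝ => x ^ (c - 2 * κ) * f x ^ 2) (Ioc (0 : ℝ) l)) :
    ∃ L₀ : ℝ,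
      Tendsto (fun x : ℝ => x ^ c * f x * f' x) (nhdsWithin 0 (Ioi 0)) (nhds L₀) ∧
      (∫ x in Ioc (0 : ℝ) l, x ^ c * f' x ^ 2) +
        lam * ∫ x in Ioc (0 : ℝ) l, x ^ (c - 2 * κ) * f x ^ 2
        = l ^ c * f l * f' l - L₀ := by
  set φ : ℝ → ℝ := fun x => x ^ c * f' x ^ 2 + lam * (x ^ (c - 2 * κ) * f x ^ 2) with hφdef
  set G : ℝ → ℝ := fun x => x ^ c * f x * f' x with hGdef
  have hint2' : IntegrableOn (fun x : ℝ => lam * (x ^ (c - 2 * κ) * f x ^ 2))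
      (Ioc (0 : ℝ) l) := hint2.const_mul lam
  have hφint : IntegrableOn φ (Ioc (0 : ℝ) l) := hint1.add hint2'
  -- derivative of G on Ioc 0 l
  have hGderiv : ∀ x ∈ Ioc (0 : ℝ) l, HasDerivWithinAt G (φ x) (Ioc (0 : ℝ) l) x := by
    intro x hx
    have h1 := (hflux x hx).mul (hderiv x hx)
    have hGe : G = fun t => (t ^ c * f' t) * f t := by
      funext t; simp only [hGdef]; ring
    rw [hGe]
    convert h1 using 1
    · rfl
    · rfl
    · rfl
    simp only [hφdef]; ring
  -- interval integrability
  have h0l : IntervalIntegrable φ volume 0 l :=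
    (intervalIntegrable_iff_integrableOn_Ioc_of_le hl.le).2 hφint
  have hεl : ∀ ε ∈ Ioo (0 : ℝ) l, IntervalIntegrable φ volume ε l := fun ε hε =>
    (intervalIntegrable_iff_integrableOn_Ioc_of_le hε.2.le).2
      (hφint.mono_set (Ioc_subset_Ioc_left hε.1.le))
  have h0ε : ∀ ε ∈ Ioo (0 : ℝ) l, IntervalIntegrable φ volume 0 ε := fun ε hε =>
    (intervalIntegrable_iff_integrableOn_Ioc_of_le hε.1.le).2
      (hφint.mono_set (Ioc_subset_Ioc_right hε.2.le))
  -- FTC on [ε, l]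
  have hFTC : ∀ ε ∈ Ioo (0 : ℝ) l, ∫ x in ε..l, φ x = G l - G ε := by
    intro ε hε
    have hsub : Icc ε l ⊆ Ioc (0 : ℝ) l := fun x hx => ⟨lt_of_lt_of_le hε.1 hx.1, hx.2⟩
    apply intervalIntegral.integral_eq_sub_of_hasDeriv_right_of_le hε.2.le
    · intro x hx
      exact ((hGderiv x (hsub hx)).continuousWithinAt).mono hsub
    · intro x hx
      have hx' : x ∈ Ioc (0 : ℝ) l := ⟨hε.1.trans hx.1, hx.2.le⟩
      have hnhds : Ioc (0 : ℝ) l ∈ nhds x := Ioc_mem_nhds hx'.1 hx.2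
      exact ((hGderiv x hx').hasDerivAt hnhds).hasDerivWithinAt
    · exact hεl ε hε
  -- the limit value
  set L₀ : ℝ := G l - ∫ x in Ioc (0 : ℝ) l, φ x with hL₀def
  -- continuity of the primitive at 0
  have hφIcc : IntegrableOn φ (Icc (0 : ℝ) l) :=
    (integrableOn_Icc_iff_integrableOn_Ioc (by finiteness)).2 hφint
  have hcont : ContinuousOn (fun x => ∫ t in Ioc (0 : ℝ) x, φ t) (Icc 0 l) :=
    intervalIntegral.continuousOn_primitive hφIcc
  have htail : Tendsto (fun ε => ∫ t in Ioc (0 : ℝ) ε, φ t) (nhdsWithin 0 (Ioo 0 l))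
      (nhds 0) := by
    have h0 : (∫ t in Ioc (0 : ℝ) (0 : ℝ), φ t) = 0 := by simp
    have := (hcont 0 (left_mem_Icc.2 hl.le))
    rw [ContinuousWithinAt, h0] at this
    exact this.mono_left (nhdsWithin_mono _ Ioo_subset_Icc_self)
  have hGlim : Tendsto G (nhdsWithin 0 (Ioi 0)) (nhds L₀) := by
    rw [← nhdsWithin_Ioo_eq_nhdsGT hl]
    have h2 : Tendsto (fun ε => G l - (∫ x in (0:ℝ)..l, φ x) + ∫ t in Ioc (0 : ℝ) ε, φ t)
        (nhdsWithin 0 (Ioo 0 l)) (nhds (G l - (∫ x in (0:ℝ)..l, φ x) + 0)) :=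
      tendsto_const_nhds.add htail
    have heq : L₀ = G l - (∫ x in (0:ℝ)..l, φ x) + 0 := by
      rw [hL₀def, intervalIntegral.integral_of_le hl.le]
      simp [MeasureTheory.Measure.restrict_congr_set Ioc_ae_eq_Icc]
    rw [heq]
    apply h2.congr'
    filter_upwards [eventually_mem_nhdsWithin] with ε hε
    have hadj : (∫ x in (0:ℝ)..ε, φ x) + ∫ x in ε..l, φ x = ∫ x in (0:ℝ)..l, φ x :=
      intervalIntegral.integral_add_adjacent_intervals (h0ε ε hε) (hεl ε hε)
    have h1 := hFTC ε hε
    have h0e : (∫ x in (0:ℝ)..ε, φ x) = ∫ t in Ioc (0 : ℝ) ε, φ t :=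
      intervalIntegral.integral_of_le hε.1.le
    rw [← h0e]
    linarith
  refine ⟨L₀, hGlim, ?_⟩
  have hsplit : (∫ x in Ioc (0 : ℝ) l, φ x)
      = (∫ x in Ioc (0 : ℝ) l, x ^ c * f' x ^ 2) +
        ∫ x in Ioc (0 : ℝ) l, lam * (x ^ (c - 2 * κ) * f x ^ 2) :=
    MeasureTheory.integral_add hint1 hint2'
  have hcm : (∫ x in Ioc (0 : ℝ) l, lam * (x ^ (c - 2 * κ) * f x ^ 2))
      = lam * ∫ x in Ioc (0 : ℝ) l, x ^ (c - 2 * κ) * f x ^ 2 :=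
    MeasureTheory.integral_const_mul lam _
  have : l ^ c * f l * f' l = G l := rfl
  rw [this, hL₀def]
  rw [hsplit, hcm]
  ring
end

section
/- Fix l > 0, κ > 1, real c, and λ̃ > 0. Let f : (0,l] → ℝ be continuous, differentiable on (0,l] with differentiable flux F(x) = xᶜ f′(x) satisfying F′(x) = λ̃ x^{c−2κ} f(x) on (0,l]. Assume the flux boundary condition lim_{x→0⁺} xᶜ f(x) f′(x) = 0 at the tip, and at x = l either the Dirichlet condition f(l) = 0 or the Neumann condition f′(l) = 0 holds. Then f is identically zero. -/
open Set Filter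

/-- A solution of the Sturm–Liouville equation `(xᶜ f′)′ = λ̃ x^{c-2κ} f` on `(0, l]`
with `λ̃ > 0`, vanishing flux `lim_{x→0⁺} xᶜ f f′ = 0` at the tip, and either Dirichlet
(`f(l) = 0`) or Neumann (`f′(l) = 0`) condition at `x = l`, is identically zero. -/
theorem SL_positive_eigenvalue_vanishing (l κ c lam : ℝ) (hl : 0 < l) (hκ : 1 < κ)
    (hlam : 0 < lam) (f f' : ℝ → ℝ)
    (hcont : ContinuousOn f (Ioc (0 : ℝ) l))
    (hderiv : ∀ x ∈ Ioc (0 : ℝ) l, HasDerivWithinAt f (f' x) (Ioc (0 : ℝ) l) x)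
    (hflux : ∀ x ∈ Ioc (0 : ℝ) l,
      HasDerivWithinAt (fun t : ℝ => t ^ c * f' t)
        (lam * x ^ (c - 2 * κ) * f x) (Ioc (0 : ℝ) l) x)
    (htip : Tendsto (fun x : ℝ => x ^ c * f x * f' x) (nhdsWithin 0 (Ioi 0)) (nhds 0))
    (hbc : f l = 0 ∨ f' l = 0) :
    ∀ x ∈ Ioc (0 : ℝ) l, f x = 0 := by
  set g : ℝ → ℝ := fun t => (t ^ c * f' t) * f t with hgdef
  have hIoo : ∀ x ∈ Ioo (0:ℝ) l, Ioc (0:ℝ) l ∈ nhds x := fun x hx =>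
    mem_nhds_iff.mpr ⟨Ioo 0 l, Ioo_subset_Ioc_self, isOpen_Ioo, hx⟩
  have hgD : ∀ x ∈ Ioo (0:ℝ) l, HasDerivAt g
      (lam * x ^ (c - 2*κ) * f x * f x + x ^ c * f' x * f' x) x := by
    intro x hx
    have hx' : x ∈ Ioc (0:ℝ) l := Ioo_subset_Ioc_self hx
    have h1 := (hflux x hx').hasDerivAt (hIoo x hx)
    have h2 := (hderiv x hx').hasDerivAt (hIoo x hx)
    exact h1.mul h2
  have hgc : ContinuousOn g (Ioc (0:ℝ) l) := by
    have hFc : ContinuousOn (fun t : ℝ => t ^ c * f' t) (Ioc (0:ℝ) l) :=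
      fun x hx => ((hflux x hx).differentiableWithinAt).continuousWithinAt
    exact hFc.mul hcont
  have hmono : MonotoneOn g (Ioc (0:ℝ) l) := by
    apply monotoneOn_of_deriv_nonneg (convex_Ioc 0 l) hgc
    · rw [interior_Ioc]
      intro x hx
      exact ((hgD x hx).differentiableAt).differentiableWithinAt
    · rw [interior_Ioc]
      intro x hx
      rw [(hgD x hx).deriv]
      have hp1 : 0 < x ^ (c - 2*κ) := Real.rpow_pos_of_pos hx.1 _
      have hp2 : 0 < x ^ c := Real.rpow_pos_of_pos hx.1 _
      nlinarith [sq_nonneg (f x), sq_nonneg (f' x),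
        mul_nonneg (mul_pos hlam hp1).le (sq_nonneg (f x)),
        mul_nonneg hp2.le (sq_nonneg (f' x))]
  have hgl : g l = 0 := by
    rcases hbc with h | h <;> simp [hgdef, h]
  have htip' : Tendsto g (nhdsWithin (0:ℝ) (Ioi 0)) (nhds 0) := by
    refine htip.congr (fun x => by simp [hgdef]; ring)
  have hgzero : ∀ x ∈ Ioc (0:ℝ) l, g x = 0 := by
    intro x hx
    have hle : g x ≤ 0 := hgl ▸ hmono hx ⟨hl, le_refl l⟩ hx.2
    have hge : 0 ≤ g x := by
      refine le_of_tendsto htip' ?_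
      have hmem : Ioo (0:ℝ) x ∈ nhdsWithin (0:ℝ) (Ioi 0) := by
        rw [← Ioi_inter_Iio]
        exact inter_mem_nhdsWithin _ (Iio_mem_nhds hx.1)
      filter_upwards [hmem] with y hy
      exact hmono ⟨hy.1, hy.2.le.trans hx.2⟩ hx hy.2.le
    linarith
  have hfzero : ∀ x ∈ Ioo (0:ℝ) l, f x = 0 := by
    intro x hx
    have hx' : x ∈ Ioc (0:ℝ) l := Ioo_subset_Ioc_self hx
    have hEq : g =ᶠ[nhds x] (fun _ => (0:ℝ)) := by
      filter_upwards [hIoo x hx] with y hy using hgzero y hy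
    have hD0 : lam * x ^ (c - 2*κ) * f x * f x + x ^ c * f' x * f' x = 0 := by
      have h1 : deriv g x = lam * x ^ (c - 2*κ) * f x * f x + x ^ c * f' x * f' x :=
        (hgD x hx).deriv
      have h2 : deriv g x = deriv (fun _ : ℝ => (0:ℝ)) x := hEq.deriv_eq
      simp only [deriv_const'] at h2
      linarith [h1 ▸ h2]
    have hp1 : 0 < x ^ (c - 2*κ) := Real.rpow_pos_of_pos hx.1 _
    have hp2 : 0 < x ^ c := Real.rpow_pos_of_pos hx.1 _
    have h2' : 0 ≤ x ^ c * f' x * f' x := by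
      nlinarith [mul_nonneg hp2.le (sq_nonneg (f' x))]
    have h1' : 0 ≤ lam * x ^ (c - 2*κ) * f x * f x := by
      nlinarith [mul_nonneg (mul_pos hlam hp1).le (sq_nonneg (f x))]
    have hterm : lam * x ^ (c - 2*κ) * f x * f x = 0 := by linarith
    rw [mul_assoc] at hterm
    have := (mul_eq_zero.mp hterm).resolve_left (mul_pos hlam hp1).ne'
    exact mul_self_eq_zero.mp this
  intro x hx
  rcases lt_or_eq_of_le hx.2 with hxl | hxl
  · exact hfzero x ⟨hx.1, hxl⟩
  · subst hxl
    rcases hbc with h | h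
    · exact h
    · -- f l = 0 by continuity from the left
      have hne : (nhdsWithin x (Ioo (0:ℝ) x)).NeBot := by
        have : x ∈ closure (Ioo (0:ℝ) x) := by
          rw [closure_Ioo hx.1.ne]
          exact ⟨hx.1.le, le_refl x⟩
        exact mem_closure_iff_nhdsWithin_neBot.mp this
      have h1 : Tendsto f (nhdsWithin x (Ioo (0:ℝ) x)) (nhds (f x)) :=
        (hcont x hx).mono_left (nhdsWithin_mono x (by
          intro y hy; exact ⟨hy.1, hy.2.le.trans hx.2⟩))
      have h2 : Tendsto f (nhdsWithin x (Ioo (0:ℝ) x)) (nhds 0) := by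
        refine tendsto_const_nhds.congr' ?_
        filter_upwards [self_mem_nhdsWithin] with y hy
        exact (hfzero y ⟨hy.1, hy.2.trans_le hx.2⟩).symm
      exact tendsto_nhds_unique h1 h2
end
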